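/- For every integer d ≥ 3, the numerical semigroup Γ generated by d − 1 and d satisfies the semigroup distribution property for d: for every integer l ≥ 1 the half-open interval ((l − 1)d, ld] contains exactly min(l + 1, d) elements of Γ. -/
import Mathlib


/-- `Γ` satisfies the semigroup distribution property for `d`: for every
`l ≥ 1` the half-open interval `((l−1)d, ld]` contains exactly
`min (l+1) d` elements of `Γ`. -/
def SemigroupDistributionProperty (Γ : Set ℕ) (d : ℕ) : Prop :=
  ∀ l : ℕ, 1 ≤ l →
    {k : ℕ | k ∈ Γ ∧ (l - 1) * d < k ∧ k ≤ l * d}.ncard = min (l + 1) d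

/-- Case (a) of the classification: the semigroup `⟨d−1, d⟩` of the cusp of a
rational unicuspidal plane curve of degree `d` with one Puiseux pair
`(d−1, d)` satisfies the semigroup distribution property for `d`. -/
theorem distribution_property_case_a (d : ℕ) (hd : 3 ≤ d) :
    SemigroupDistributionProperty
      {n : ℕ | ∃ x y : ℕ, n = x * (d - 1) + y * d} d := by
  intro l hl
  set m := min (l + 1) d with hm
  have hdl : d ≤ l * d := Nat.le_mul_of_pos_left d hl
  have hsub : (l - 1) * d = l * d - d := by
    rw [Nat.sub_mul, one_mul]
  have hset : {k : ℕ | k ∈ {n : ℕ | ∃ x y : ℕ, n = x * (d - 1) + y * d} ∧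
      (l - 1) * d < k ∧ k ≤ l * d}
      = ↑((Finset.range m).image (fun j => l * d - j)) := by
    ext k
    simp only [Set.mem_setOf_eq, Finset.coe_image, Set.mem_image, Finset.mem_coe,
      Finset.mem_range]
    constructor
    · rintro ⟨⟨x, y, hxy⟩, hlow, hhigh⟩
      refine ⟨l * d - k, ?_, by omega⟩
      have hkj : k + (l * d - k) = l * d := by omega
      set j := l * d - k with hj
      have hjd : j < d := by omega
      -- key modular identity
      have heq : x + l * d = j + (x + y) * d := by
        have h1 : x * (d - 1) + x = x * d := by
          have : d - 1 + 1 = d := by omega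
          calc x * (d - 1) + x = x * ((d - 1) + 1) := by ring
            _ = x * d := by rw [this]
        have : k + x = (x + y) * d := by rw [hxy]; rw [add_mul]; omega
        omega
      have hmod : x % d = j % d := by
        have := congrArg (· % d) heq
        simpa [Nat.add_mul_mod_self_right] using this
      have hjx : j ≤ x := by
        have h1 : x % d ≤ x := Nat.mod_le x d
        have h2 : j % d = j := Nat.mod_eq_of_lt hjd
        omega
      have hjk : j * (d - 1) ≤ k := by
        rw [hxy]
        exact le_trans (Nat.mul_le_mul_right _ hjx) (Nat.le_add_right _ _)
      have hjl : j ≤ l := by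
        have : j * d ≤ l * d := by
          have : j * (d - 1) + j = j * d := by
            have hh : d - 1 + 1 = d := by omega
            calc j * (d - 1) + j = j * ((d - 1) + 1) := by ring
              _ = j * d := by rw [hh]
          omega
        exact Nat.le_of_mul_le_mul_right this (by omega)
      omega
    · rintro ⟨j, hj, rfl⟩
      have hjl : j ≤ l := by omega
      have hjd : j < d := by omega
      have hjld : j ≤ l * d := by omega
      refine ⟨⟨j, l - j, ?_⟩, by omega, by omega⟩
      zify [hjl, hjld, show 1 ≤ d by omega]
      ring
  rw [hset, Set.ncard_coe_finset, Finset.card_image_of_injOn, Finset.card_range]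
  intro a ha b hb hab
  simp only [Finset.coe_range, Set.mem_Iio] at ha hb
  have hab' : l * d - a = l * d - b := hab
  omega
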